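/- Let a, b, c, α, β, γ ∈ (0,π) satisfy the three equations cos b·cos c + sin b·sin c·cos α = cos a, cos c·cos a + sin c·sin a·cos β = cos b, and cos a·cos b + sin a·sin b·cos γ = cos c. Then there exist linearly independent unit vectors u, v, w in EuclideanSpace ℝ (Fin 3) such that angle(v,w) = a, angle(w,u) = b, angle(u,v) = c, and the spherical vertex angles satisfy angle(v − ⟨v,u⟩u, w − ⟨w,u⟩u) = α, angle(u − ⟨u,v⟩v, w − ⟨w,v⟩v) = β, angle(u − ⟨u,w⟩w, v − ⟨v,w⟩w) = γ; that is, there is a spherical triangle with edgelengths a, b, c and respectively opposite angles α, β, γ. -/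

import Mathlib

open Real InnerProductGeometry

section
variable {E : Type*} [NormedAddCommGroup E] [InnerProductSpace ℝ E]

lemma angle_eq_of (x y : E) (s t θ : ℝ) (hs : 0 < s) (ht : 0 < t)
    (h0 : 0 ≤ θ) (hπ : θ ≤ π) (hx : ‖x‖ = s) (hy : ‖y‖ = t)
    (hxy : (inner ℝ x y : ℝ) = s * t * Real.cos θ) :
    InnerProductGeometry.angle x y = θ := by
  rw [InnerProductGeometry.angle, hx, hy, hxy,
    mul_div_cancel_left₀ _ (by positivity : s * t ≠ 0)]
  exact Real.arccos_cos h0 hπ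

lemma vertex_angle (u v w : E) (b c α : ℝ)
    (hb : b ∈ Set.Ioo 0 π) (hc : c ∈ Set.Ioo 0 π) (hα : α ∈ Set.Ioo 0 π)
    (hu : ‖u‖ = 1) (hv : ‖v‖ = 1) (hw : ‖w‖ = 1)
    (hvu : (inner ℝ v u : ℝ) = Real.cos c) (hwu : (inner ℝ w u : ℝ) = Real.cos b)
    (hvw : (inner ℝ v w : ℝ) = Real.cos b * Real.cos c + Real.sin b * Real.sin c * Real.cos α) :
    InnerProductGeometry.angle (v - (inner ℝ v u : ℝ) • u) (w - (inner ℝ w u : ℝ) • u) = α := by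
  have sb := Real.sin_pos_of_pos_of_lt_pi hb.1 hb.2
  have sc := Real.sin_pos_of_pos_of_lt_pi hc.1 hc.2
  have huv : (inner ℝ u v : ℝ) = Real.cos c := by rw [real_inner_comm]; exact hvu
  have huw : (inner ℝ u w : ℝ) = Real.cos b := by rw [real_inner_comm]; exact hwu
  have huu : (inner ℝ u u : ℝ) = 1 := by
    rw [real_inner_self_eq_norm_sq, hu]; norm_num
  have hvv : (inner ℝ v v : ℝ) = 1 := by
    rw [real_inner_self_eq_norm_sq, hv]; norm_num
  have hww : (inner ℝ w w : ℝ) = 1 := by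
    rw [real_inner_self_eq_norm_sq, hw]; norm_num
  apply angle_eq_of _ _ (Real.sin c) (Real.sin b) α sc sb hα.1.le hα.2.le
  · have : (inner ℝ (v - (inner ℝ v u : ℝ) • u) (v - (inner ℝ v u : ℝ) • u) : ℝ) = Real.sin c ^ 2 := by
      simp only [inner_sub_left, inner_sub_right, real_inner_smul_left, real_inner_smul_right,
        hvu, huv, huu, hvv]
      nlinarith [Real.sin_sq_add_cos_sq c]
    have h' : ‖v - (inner ℝ v u : ℝ) • u‖ ^ 2 = Real.sin c ^ 2 := by
      rw [← real_inner_self_eq_norm_sq]; exact this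
    nlinarith [norm_nonneg (v - (inner ℝ v u : ℝ) • u), sc]
  · have : (inner ℝ (w - (inner ℝ w u : ℝ) • u) (w - (inner ℝ w u : ℝ) • u) : ℝ) = Real.sin b ^ 2 := by
      simp only [inner_sub_left, inner_sub_right, real_inner_smul_left, real_inner_smul_right,
        hwu, huw, huu, hww]
      nlinarith [Real.sin_sq_add_cos_sq b]
    have h' : ‖w - (inner ℝ w u : ℝ) • u‖ ^ 2 = Real.sin b ^ 2 := by
      rw [← real_inner_self_eq_norm_sq]; exact this
    nlinarith [norm_nonneg (w - (inner ℝ w u : ℝ) • u), sb]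
  · simp only [inner_sub_left, inner_sub_right, real_inner_smul_left, real_inner_smul_right,
      hvu, hwu, huw, hvw, huu]
    ring

end

theorem stmt_4 (a b c α β γ : ℝ)
    (ha : a ∈ Set.Ioo 0 π) (hb : b ∈ Set.Ioo 0 π) (hc : c ∈ Set.Ioo 0 π)
    (hα : α ∈ Set.Ioo 0 π) (hβ : β ∈ Set.Ioo 0 π) (hγ : γ ∈ Set.Ioo 0 π)
    (h1 : Real.cos b * Real.cos c + Real.sin b * Real.sin c * Real.cos α = Real.cos a)
    (h2 : Real.cos c * Real.cos a + Real.sin c * Real.sin a * Real.cos β = Real.cos b)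
    (h3 : Real.cos a * Real.cos b + Real.sin a * Real.sin b * Real.cos γ = Real.cos c) :
    ∃ u v w : EuclideanSpace ℝ (Fin 3),
      ‖u‖ = 1 ∧ ‖v‖ = 1 ∧ ‖w‖ = 1 ∧ LinearIndependent ℝ ![u, v, w] ∧
      InnerProductGeometry.angle v w = a ∧
      InnerProductGeometry.angle w u = b ∧
      InnerProductGeometry.angle u v = c ∧
      InnerProductGeometry.angle (v - (inner ℝ v u : ℝ) • u) (w - (inner ℝ w u : ℝ) • u) = α ∧
      InnerProductGeometry.angle (u - (inner ℝ u v : ℝ) • v) (w - (inner ℝ w v : ℝ) • v) = β ∧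
      InnerProductGeometry.angle (u - (inner ℝ u w : ℝ) • w) (v - (inner ℝ v w : ℝ) • w) = γ := by
  have sa := Real.sin_pos_of_pos_of_lt_pi ha.1 ha.2
  have sb := Real.sin_pos_of_pos_of_lt_pi hb.1 hb.2
  have sc := Real.sin_pos_of_pos_of_lt_pi hc.1 hc.2
  have sα := Real.sin_pos_of_pos_of_lt_pi hα.1 hα.2
  set u : EuclideanSpace ℝ (Fin 3) := (WithLp.equiv 2 (Fin 3 → ℝ)).symm ![1, 0, 0] with hudef
  set v : EuclideanSpace ℝ (Fin 3) := (WithLp.equiv 2 (Fin 3 → ℝ)).symm ![Real.cos c, Real.sin c, 0] with hvdef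
  set w : EuclideanSpace ℝ (Fin 3) :=
    (WithLp.equiv 2 (Fin 3 → ℝ)).symm ![Real.cos b, Real.sin b * Real.cos α, Real.sin b * Real.sin α] with hwdef
  have hinner : ∀ x y : Fin 3 → ℝ,
      (inner ℝ ((WithLp.equiv 2 (Fin 3 → ℝ)).symm x) ((WithLp.equiv 2 (Fin 3 → ℝ)).symm y) : ℝ)
        = x 0 * y 0 + x 1 * y 1 + x 2 * y 2 := by
    intro x y
    simp [PiLp.inner_apply, Fin.sum_univ_three, WithLp.equiv_symm_apply,
      RCLike.inner_apply, conj_trivial]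
    ring
  have hn1 : ∀ x : EuclideanSpace ℝ (Fin 3), (inner ℝ x x : ℝ) = 1 → ‖x‖ = 1 := by
    intro x h
    have h2 := real_inner_self_eq_norm_sq x
    nlinarith [norm_nonneg x]
  have huu : (inner ℝ u u : ℝ) = 1 := by rw [hudef, hinner]; norm_num; rfl
  have hvv : (inner ℝ v v : ℝ) = 1 := by
    rw [hvdef, hinner]; simp; nlinarith [Real.sin_sq_add_cos_sq c]
  have hww : (inner ℝ w w : ℝ) = 1 := by
    rw [hwdef, hinner]; simp
    nlinarith [Real.sin_sq_add_cos_sq b, Real.sin_sq_add_cos_sq α]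
  have hu : ‖u‖ = 1 := hn1 u huu
  have hv : ‖v‖ = 1 := hn1 v hvv
  have hw : ‖w‖ = 1 := hn1 w hww
  have huv : (inner ℝ u v : ℝ) = Real.cos c := by rw [hudef, hvdef, hinner]; simp
  have hvu : (inner ℝ v u : ℝ) = Real.cos c := by rw [real_inner_comm]; exact huv
  have huw : (inner ℝ u w : ℝ) = Real.cos b := by rw [hudef, hwdef, hinner]; simp
  have hwu : (inner ℝ w u : ℝ) = Real.cos b := by rw [real_inner_comm]; exact huw
  have hvw : (inner ℝ v w : ℝ) = Real.cos a := by
    rw [hvdef, hwdef, hinner]; simp; linear_combination h1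
  have hwv : (inner ℝ w v : ℝ) = Real.cos a := by rw [real_inner_comm]; exact hvw
  refine ⟨u, v, w, hu, hv, hw, ?_, ?_, ?_, ?_, ?_, ?_, ?_⟩
  · rw [Fintype.linearIndependent_iff]
    intro g hg
    simp only [Fin.sum_univ_three, Matrix.cons_val_zero, Matrix.cons_val_one, Matrix.head_cons,
      Matrix.cons_val_two, Matrix.tail_cons] at hg
    have key : ∀ i : Fin 3, g 0 * (WithLp.equiv 2 (Fin 3 → ℝ)) u i
        + g 1 * (WithLp.equiv 2 (Fin 3 → ℝ)) v i + g 2 * (WithLp.equiv 2 (Fin 3 → ℝ)) w i = 0 := by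
      intro i
      have e := congrFun (congrArg (WithLp.equiv 2 (Fin 3 → ℝ)) hg) i
      simpa [Pi.add_apply, Pi.smul_apply, smul_eq_mul] using e
    have e0 := key 0
    have e1 := key 1
    have e2 := key 2
    rw [hudef, hvdef, hwdef] at e0 e1 e2
    simp [Equiv.apply_symm_apply] at e0 e1 e2
    have hg2 : g 2 = 0 := by
      rcases e2 with h | h | h
      · exact h
      · exact absurd h sb.ne'
      · exact absurd h sα.ne'
    have hg1 : g 1 = 0 := by
      have : g 1 * Real.sin c = 0 := by rw [hg2] at e1; linarith
      rcases mul_eq_zero.1 this with h | h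
      · exact h
      · exact absurd h sc.ne'
    intro i
    fin_cases i
    · simpa [hg1, hg2] using e0
    · exact hg1
    · exact hg2
  · exact angle_eq_of v w 1 1 a one_pos one_pos ha.1.le ha.2.le hv hw (by rw [hvw]; ring)
  · exact angle_eq_of w u 1 1 b one_pos one_pos hb.1.le hb.2.le hw hu (by rw [hwu]; ring)
  · exact angle_eq_of u v 1 1 c one_pos one_pos hc.1.le hc.2.le hu hv (by rw [huv]; ring)
  · exact vertex_angle u v w b c α hb hc hα hu hv hw hvu hwu (by rw [hvw]; linarith)
  · exact vertex_angle v u w a c β ha hc hβ hv hu hw huv hwv (by rw [huw]; linarith)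
  · exact vertex_angle w u v a b γ ha hb hγ hw hu hv huw hvw (by rw [huv]; linarith)
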